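/- For the anisotropic Ising model: ⊞ is the unique global minimizer of H^A, and for every configuration σ ∉ {⊟, ⊞} there exists a configuration σ' with H^A(σ') < H^A(σ) and Φ(σ,σ') − H^A(σ) < Γ*_A; consequently the stability level V_σ = min_{η : H^A(η) < H^A(σ)} Φ(σ,η) − H^A(σ) satisfies V_σ < Γ*_A for all σ ∉ {⊟, ⊞}. -/

import Mathlib

open scoped Classical

/-- A site of the two-dimensional discrete torus of side length `L`. -/
abbrev Site (L : ℕ) := ZMod L × ZMod L

/-- A configuration, identified with its set of `(+1)`-sites. -/
abbrev Config (L : ℕ) := Finset (Site L)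

/-- The spin value (`+1` or `-1`) of a configuration at a site. -/
noncomputable def spin {L : ℕ} (σ : Config L) (x : Site L) : ℝ :=
  if x ∈ σ then 1 else -1

/-- The configuration obtained by flipping the spin at site `x`. -/
def flipSpin {L : ℕ} (σ : Config L) (x : Site L) : Config L :=
  if x ∈ σ then σ.erase x else insert x σ

/-- Two configurations are adjacent if they differ at exactly one site. -/
def Adjacent {L : ℕ} (σ σ' : Config L) : Prop := ∃ x, σ' = flipSpin σ x

/-- `γ` is a path from `σ` to `σ'`: a finite sequence of configurations starting at `σ`,
ending at `σ'`, in which consecutive configurations are adjacent. -/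
def IsPath {L : ℕ} (σ σ' : Config L) (γ : List (Config L)) : Prop :=
  γ.head? = some σ ∧ γ.getLast? = some σ' ∧ γ.Chain' Adjacent

/-- The communication height `Φ(σ,σ')` for the Hamiltonian `H`: the minimum over paths
`γ : σ → σ'` of the maximal energy along `γ`. -/
noncomputable def commHeight {L : ℕ} (H : Config L → ℝ) (σ σ' : Config L) : ℝ :=
  sInf { M | ∃ γ : List (Config L), IsPath σ σ' γ ∧ ∀ η ∈ γ, H η ≤ M }

/-- A path is optimal if its maximal energy attains the communication height. -/
def IsOptimalPath {L : ℕ} (H : Config L → ℝ) (σ σ' : Config L) (γ : List (Config L)) : Prop :=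
  IsPath σ σ' γ ∧ ∀ η ∈ γ, H η ≤ commHeight H σ σ'

/-- The all-`(-1)` configuration `⊟`. -/
def boxMinus (L : ℕ) : Config L := ∅

/-- The all-`(+1)` configuration `⊞`. -/
def boxPlus (L : ℕ) [NeZero L] : Config L := Finset.univ

/-- Two sites are nearest neighbours on the torus. -/
def SiteAdj {L : ℕ} (x y : Site L) : Prop :=
  y = x + (1, 0) ∨ y = x + (-1, 0) ∨ y = x + (0, 1) ∨ y = x + (0, -1)

/-- `x` and `y` are connected inside the set of `(+1)`-sites of `σ` by a
nearest-neighbour chain. -/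
def ConnectedIn {L : ℕ} (σ : Config L) (x y : Site L) : Prop :=
  Relation.ReflTransGen (fun u v => u ∈ σ ∧ v ∈ σ ∧ SiteAdj u v) x y

/-- The connected component of the `(+1)`-sites of `σ` containing `x`. -/
noncomputable def component {L : ℕ} (σ : Config L) (x : Site L) : Config L :=
  σ.filter fun y => ConnectedIn σ x y

/-- `σ` consists of a single (nonempty) connected component of `(+1)`-sites. -/
def IsSingleDroplet {L : ℕ} (σ : Config L) : Prop :=
  σ.Nonempty ∧ ∀ x ∈ σ, ∀ y ∈ σ, ConnectedIn σ x y

/-- Two droplets are isolated: their Euclidean distance is at least `√2`, i.e. no site of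
one is a nearest neighbour of a site of the other. -/
def Isolated {L : ℕ} (A B : Config L) : Prop :=
  ∀ x ∈ A, ∀ y ∈ B, ¬ SiteAdj x y

/-- The rectangle on the torus with lower-left corner `a`, horizontal side `l₁` and
vertical side `l₂`. -/
def rectC {L : ℕ} (a : Site L) (l₁ l₂ : ℕ) : Config L :=
  (Finset.range l₁ ×ˢ Finset.range l₂).image
    fun p => a + ((p.1 : ZMod L), (p.2 : ZMod L))

/-- The horizontal side length `P_H R(σ)` of the rectangular envelope of `σ`. -/
noncomputable def PH {L : ℕ} (σ : Config L) : ℕ :=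
  sInf { l | ∃ c : ZMod L, ∀ x ∈ σ, ∃ i < l, x.1 = c + (i : ZMod L) }

/-- The vertical side length `P_V R(σ)` of the rectangular envelope of `σ`. -/
noncomputable def PV {L : ℕ} (σ : Config L) : ℕ :=
  sInf { l | ∃ c : ZMod L, ∀ x ∈ σ, ∃ i < l, x.2 = c + (i : ZMod L) }

/-- `σ` does not wrap around the torus horizontally: some column is empty. -/
def NoWrapH {L : ℕ} (σ : Config L) : Prop := ∃ c : ZMod L, ∀ x ∈ σ, x.1 ≠ c

/-- `σ` does not wrap around the torus vertically: some row is empty. -/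
def NoWrapV {L : ℕ} (σ : Config L) : Prop := ∃ c : ZMod L, ∀ x ∈ σ, x.2 ≠ c

/-- `R` is the rectangular envelope of `σ`: the smallest rectangle on the torus
containing the `(+1)`-sites of `σ`. -/
def IsEnvelope {L : ℕ} (σ R : Config L) : Prop :=
  (∃ a l₁ l₂, R = rectC a l₁ l₂) ∧ σ ⊆ R ∧
    ∀ R' : Config L, (∃ a l₁ l₂, R' = rectC a l₁ l₂) → σ ⊆ R' → R.card ≤ R'.card

/-- The set `R(l₁, l₂) = R(l₁ × l₂) ∪ R(l₂ × l₁)` of single rectangles with side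
lengths `l₁` and `l₂`. -/
def RSet {L : ℕ} (l₁ l₂ : ℕ) (σ : Config L) : Prop :=
  (∃ a : Site L, σ = rectC a l₁ l₂) ∨ (∃ a : Site L, σ = rectC a l₂ l₁)

/-- The set `R(l−1, l)^{1pr}`: a rectangle with sides `l−1` and `l` together with one
protuberance attached to one of its longer sides. -/
def RSet1pr {L : ℕ} (l : ℕ) (σ : Config L) : Prop :=
  (∃ a : Site L, ∃ j < l,
      σ = insert (a + ((-1 : ZMod L), (j : ZMod L))) (rectC a (l - 1) l) ∨
      σ = insert (a + (((l - 1 : ℕ) : ZMod L), (j : ZMod L))) (rectC a (l - 1) l)) ∨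
  (∃ a : Site L, ∃ j < l,
      σ = insert (a + ((j : ZMod L), (-1 : ZMod L))) (rectC a l (l - 1)) ∨
      σ = insert (a + ((j : ZMod L), ((l - 1 : ℕ) : ZMod L))) (rectC a l (l - 1)))

/-- The anisotropic Ising Hamiltonian `H^A`. -/
noncomputable def HA {L : ℕ} [NeZero L] (JH JV h : ℝ) (σ : Config L) : ℝ :=
  - (JH / 2) * ∑ x : Site L, spin σ x * spin σ (x + (1, 0))
  - (JV / 2) * ∑ x : Site L, spin σ x * spin σ (x + (0, 1))
  - (h / 2) * ∑ x : Site L, spin σ x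

/-- The next-nearest-neighbour Ising Hamiltonian `H^NN`. -/
noncomputable def HNN {L : ℕ} [NeZero L] (Jt K h : ℝ) (σ : Config L) : ℝ :=
  - (Jt / 2) * ((∑ x : Site L, spin σ x * spin σ (x + (1, 0)))
      + ∑ x : Site L, spin σ x * spin σ (x + (0, 1)))
  - (K / 2) * ((∑ x : Site L, spin σ x * spin σ (x + (1, 1)))
      + ∑ x : Site L, spin σ x * spin σ (x + (1, -1)))
  - (h / 2) * ∑ x : Site L, spin σ x

/-- The octagon `Q(Dn, Dw; ℓ_ne, ℓ_nw, ℓ_sw, ℓ_se)` with lower-left corner `a`, obtained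
from the `Dn × Dw` rectangle by cutting `ℓ_a − 1` oblique bars from corner `a`. -/
def octagon {L : ℕ} (a : Site L) (Dn Dw lne lnw lsw lse : ℕ) : Config L :=
  ((Finset.range Dn ×ˢ Finset.range Dw).filter fun p =>
      lsw ≤ p.1 + p.2 + 1 ∧ lse ≤ (Dn - 1 - p.1) + p.2 + 1 ∧
      lnw ≤ p.1 + (Dw - 1 - p.2) + 1 ∧ lne ≤ (Dn - 1 - p.1) + (Dw - 1 - p.2) + 1).image
    fun p => a + ((p.1 : ZMod L), (p.2 : ZMod L))

/-- The set `Q(Dn, Dw)` of octagons with side lengths `Dn`, `Dw`, all oblique edge lengths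
equal to `l` (including rotations and translations). -/
def QSet {L : ℕ} (Dn Dw l : ℕ) (σ : Config L) : Prop :=
  (∃ a : Site L, σ = octagon a Dn Dw l l l l) ∨
  (∃ a : Site L, σ = octagon a Dw Dn l l l l)

/-- The set `Q(D − 1, D)^{1pr}`: an octagon from `Q(D − 1, D; l)` together with one
protuberance attached at the interior of one of its longest coordinate edges. -/
def Q1pr {L : ℕ} (D l : ℕ) (σ : Config L) : Prop :=
  (∃ a : Site L, ∃ j : ℕ, l ≤ j ∧ j + l + 1 ≤ D ∧
      (σ = insert (a + ((-1 : ZMod L), (j : ZMod L))) (octagon a (D - 1) D l l l l) ∨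
       σ = insert (a + (((D - 1 : ℕ) : ZMod L), (j : ZMod L))) (octagon a (D - 1) D l l l l))) ∨
  (∃ a : Site L, ∃ j : ℕ, l ≤ j ∧ j + l + 1 ≤ D ∧
      (σ = insert (a + ((j : ZMod L), (-1 : ZMod L))) (octagon a D (D - 1) l l l l) ∨
       σ = insert (a + ((j : ZMod L), ((D - 1 : ℕ) : ZMod L))) (octagon a D (D - 1) l l l l)))

/-- A stable octagon: all four coordinate edges and all four oblique edges have
length at least 2. -/
def IsStableOctagon {L : ℕ} (σ : Config L) : Prop :=
  ∃ a : Site L, ∃ Dn Dw lne lnw lsw lse : ℕ,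
    2 ≤ lne ∧ 2 ≤ lnw ∧ 2 ≤ lsw ∧ 2 ≤ lse ∧
    lne + lnw ≤ Dn ∧ lsw + lse ≤ Dn ∧ lnw + lsw ≤ Dw ∧ lne + lse ≤ Dw ∧
    σ = octagon a Dn Dw lne lnw lsw lse

/-- A rectangle that wraps around the torus. -/
def IsWrappingRect {L : ℕ} (σ : Config L) : Prop :=
  ∃ a : Site L, ∃ l₁ l₂ : ℕ, 1 ≤ l₁ ∧ l₁ ≤ L ∧ 1 ≤ l₂ ∧ l₂ ≤ L ∧ (l₁ = L ∨ l₂ = L) ∧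
    σ = rectC a l₁ l₂

/-- The Hamiltonian `H^±` of the Ising model with alternating magnetic field. -/
noncomputable def Hpm {L : ℕ} [NeZero L] (J hodd heven : ℝ) (σ : Config L) : ℝ :=
  - (J / 2) * ((∑ x : Site L, spin σ x * spin σ (x + (1, 0)))
      + ∑ x : Site L, spin σ x * spin σ (x + (0, 1)))
  + (hodd / 2) * ∑ x ∈ Finset.univ.filter (fun x : Site L => x.2.val % 2 = 1), spin σ x
  - (heven / 2) * ∑ x ∈ Finset.univ.filter (fun x : Site L => x.2.val % 2 = 0), spin σ x

/-- A stable rectangle for the alternating-field model: horizontal side `l₁ ≥ 2`,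
odd vertical side `l₂ ≥ 3`, bottom (and hence top) row in the even rows. -/
def IsStableRect {L : ℕ} (σ : Config L) : Prop :=
  ∃ a : Site L, ∃ l₁ l₂ : ℕ, 2 ≤ l₁ ∧ l₁ ≤ L ∧ 3 ≤ l₂ ∧ l₂ ≤ L ∧ Odd l₂ ∧
    a.2.val % 2 = 0 ∧ σ = rectC a l₁ l₂

/-- A configuration in `P₁` with protuberance at `p`: an `(lb−1) × lh` rectangle with
bottom and top rows in the even rows, plus a protuberance `p` attached to one of the
longer (vertical) sides in an even row. -/
def P1at {L : ℕ} (lb lh : ℕ) (σ : Config L) (p : Site L) : Prop :=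
  ∃ a : Site L, a.2.val % 2 = 0 ∧ ∃ j : ℕ, j < lh ∧ j % 2 = 0 ∧
    (p = a + ((-1 : ZMod L), (j : ZMod L)) ∨
     p = a + (((lb - 1 : ℕ) : ZMod L), (j : ZMod L))) ∧
    σ = insert p (rectC a (lb - 1) lh)

/-- The set `P₁`. -/
def P1 {L : ℕ} (lb lh : ℕ) (σ : Config L) : Prop := ∃ p : Site L, P1at lb lh σ p

/-- The set `C₁`: obtained from a configuration in `P₁` by adding a second `(+1)`-spin
in an odd row adjacent to the protuberance. -/
def C1 {L : ℕ} (lb lh : ℕ) (σ : Config L) : Prop :=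
  ∃ σ' : Config L, ∃ p : Site L, P1at lb lh σ' p ∧
    (σ = insert (p + ((0 : ZMod L), (1 : ZMod L))) σ' ∨
     σ = insert (p + ((0 : ZMod L), (-1 : ZMod L))) σ')

/-- The set `P₂`: an `lb × (lh−2)` rectangle with bottom and top rows in the even rows,
plus a vertical or horizontal bar of length 2 attached above or below. -/
def P2 {L : ℕ} (lb lh : ℕ) (σ : Config L) : Prop :=
  ∃ a : Site L, a.2.val % 2 = 0 ∧
    ((∃ i : ℕ, i < lb ∧
        σ = insert (a + ((i : ZMod L), ((lh - 2 : ℕ) : ZMod L)))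
            (insert (a + ((i : ZMod L), ((lh - 1 : ℕ) : ZMod L))) (rectC a lb (lh - 2)))) ∨
     (∃ i : ℕ, i + 2 ≤ lb ∧
        σ = insert (a + ((i : ZMod L), ((lh - 2 : ℕ) : ZMod L)))
            (insert (a + (((i + 1 : ℕ) : ZMod L), ((lh - 2 : ℕ) : ZMod L)))
              (rectC a lb (lh - 2)))) ∨
     (∃ i : ℕ, i < lb ∧
        σ = insert (a + ((i : ZMod L), (-1 : ZMod L)))
            (insert (a + ((i : ZMod L), (-2 : ZMod L))) (rectC a lb (lh - 2)))) ∨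
     (∃ i : ℕ, i + 2 ≤ lb ∧
        σ = insert (a + ((i : ZMod L), (-1 : ZMod L)))
            (insert (a + (((i + 1 : ℕ) : ZMod L), (-1 : ZMod L))) (rectC a lb (lh - 2)))))

/-- The set `C₂`: an `lb × (lh−2)` rectangle with bottom and top rows in the even rows,
plus, above or below it, a vertical bar of length 2 together with a `(+1)`-spin
adjacent to the bar in an odd row. -/
def C2 {L : ℕ} (lb lh : ℕ) (σ : Config L) : Prop :=
  ∃ a : Site L, a.2.val % 2 = 0 ∧
    ((∃ i : ℕ, i < lb ∧ ∃ s : ZMod L, (s = 1 ∨ s = -1) ∧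
        σ = insert (a + ((i : ZMod L) + s, ((lh - 2 : ℕ) : ZMod L)))
            (insert (a + ((i : ZMod L), ((lh - 2 : ℕ) : ZMod L)))
              (insert (a + ((i : ZMod L), ((lh - 1 : ℕ) : ZMod L))) (rectC a lb (lh - 2))))) ∨
     (∃ i : ℕ, i < lb ∧ ∃ s : ZMod L, (s = 1 ∨ s = -1) ∧
        σ = insert (a + ((i : ZMod L) + s, (-1 : ZMod L)))
            (insert (a + ((i : ZMod L), (-1 : ZMod L)))
              (insert (a + ((i : ZMod L), (-2 : ZMod L))) (rectC a lb (lh - 2))))))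

set_option linter.unusedSectionVars false

section Aux
variable {L : ℕ} [NeZero L]

lemma spin_le_one (σ : Config L) (x : Site L) : spin σ x ≤ 1 := by
  unfold spin; split <;> norm_num

lemma neg_one_le_spin (σ : Config L) (x : Site L) : -1 ≤ spin σ x := by
  unfold spin; split <;> norm_num

lemma spin_of_mem {σ : Config L} {x : Site L} (h : x ∈ σ) : spin σ x = 1 := if_pos h

lemma spin_of_not_mem {σ : Config L} {x : Site L} (h : x ∉ σ) : spin σ x = -1 := if_neg h

lemma sum_diff_pair {f g : Site L → ℝ} {x z : Site L} (hzx : x ≠ z)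
    (h : ∀ y, y ≠ x → y ≠ z → f y = g y) :
    ∑ y, f y - ∑ y, g y = (f x - g x) + (f z - g z) := by
  rw [← Finset.sum_sub_distrib]
  have h2 : ∑ y ∈ ({x, z} : Finset (Site L)), (f y - g y) = ∑ y, (f y - g y) := by
    refine Finset.sum_subset (Finset.subset_univ _) ?_
    intro y _ hy
    simp only [Finset.mem_insert, Finset.mem_singleton] at hy
    push_neg at hy
    rw [h y hy.1 hy.2]; ring
  rw [← h2, Finset.sum_pair hzx]

lemma sum_diff_single {f g : Site L → ℝ} {x : Site L}
    (h : ∀ y, y ≠ x → f y = g y) :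
    ∑ y, f y - ∑ y, g y = f x - g x := by
  rw [← Finset.sum_sub_distrib]
  have h2 : ∑ y ∈ ({x} : Finset (Site L)), (f y - g y) = ∑ y, (f y - g y) := by
    refine Finset.sum_subset (Finset.subset_univ _) ?_
    intro y _ hy
    simp only [Finset.mem_singleton] at hy
    rw [h y hy]; ring
  rw [← h2, Finset.sum_singleton]

lemma one_ne_zero_zmod (hL : 2 ≤ L) : (1 : ZMod L) ≠ 0 := by
  intro hcon
  have h1 : ((1 : ℕ) : ZMod L).val = 1 := ZMod.val_cast_of_lt (by omega)
  rw [Nat.cast_one, hcon, ZMod.val_zero] at h1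
  omega

lemma add_ne_self {x e : Site L} (he : e ≠ 0) : x + e ≠ x :=
  fun hcon => he (by rwa [add_eq_left] at hcon)

lemma sub_ne_self {x e : Site L} (he : e ≠ 0) : x - e ≠ x :=
  fun hcon => he (by rwa [sub_eq_self] at hcon)

lemma e10_ne_zero (hL : 2 ≤ L) : ((1, 0) : Site L) ≠ 0 := by
  simp [Prod.ext_iff, one_ne_zero_zmod hL]

lemma e01_ne_zero (hL : 2 ≤ L) : ((0, 1) : Site L) ≠ 0 := by
  simp [Prod.ext_iff, one_ne_zero_zmod hL]

lemma spin_insert_ne {σ : Config L} {x y : Site L} (h : y ≠ x) :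
    spin (insert x σ) y = spin σ y := by
  unfold spin
  simp [Finset.mem_insert, h]

lemma sum_insert_e {σ : Config L} {x : Site L} (hx : x ∉ σ) {e : Site L} (he : e ≠ 0) :
    ∑ y : Site L, spin (insert x σ) y * spin (insert x σ) (y + e)
      = (∑ y : Site L, spin σ y * spin σ (y + e))
        + 2 * (spin σ (x + e) + spin σ (x - e)) := by
  have hxe : x + e ≠ x := add_ne_self he
  have hxe' : x - e ≠ x := sub_ne_self he
  have key : (∑ y : Site L, spin (insert x σ) y * spin (insert x σ) (y + e))
      - (∑ y : Site L, spin σ y * spin σ (y + e))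
      = (spin (insert x σ) x * spin (insert x σ) (x + e) - spin σ x * spin σ (x + e))
        + (spin (insert x σ) (x - e) * spin (insert x σ) ((x - e) + e)
            - spin σ (x - e) * spin σ ((x - e) + e)) := by
    apply sum_diff_pair hxe'.symm
    intro y hy1 hy2
    have hye : y + e ≠ x := by
      intro hcon
      exact hy2 (by rw [← hcon]; simp)
    rw [spin_insert_ne hy1, spin_insert_ne hye]
  rw [spin_insert_ne hxe, spin_insert_ne hxe', sub_add_cancel,
    spin_of_mem (Finset.mem_insert_self x σ), spin_of_not_mem hx] at key
  linarith [key]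

lemma sum_insert_field {σ : Config L} {x : Site L} (hx : x ∉ σ) :
    ∑ y : Site L, spin (insert x σ) y = (∑ y : Site L, spin σ y) + 2 := by
  have key : (∑ y : Site L, spin (insert x σ) y) - (∑ y : Site L, spin σ y)
      = spin (insert x σ) x - spin σ x := by
    apply sum_diff_single
    intro y hy
    exact spin_insert_ne hy
  rw [spin_of_mem (Finset.mem_insert_self x σ), spin_of_not_mem hx] at key
  linarith

lemma HA_insert {JH JV h : ℝ} (hL : 2 ≤ L) {σ : Config L} {x : Site L} (hx : x ∉ σ) :
    HA JH JV h (insert x σ) = HA JH JV h σ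
      - JH * (spin σ (x + (1, 0)) + spin σ (x - (1, 0)))
      - JV * (spin σ (x + (0, 1)) + spin σ (x - (0, 1)))
      - h := by
  unfold HA
  rw [sum_insert_e hx (e10_ne_zero hL), sum_insert_e hx (e01_ne_zero hL),
    sum_insert_field hx]
  ring

lemma HA_erase {JH JV h : ℝ} (hL : 2 ≤ L) {σ : Config L} {x : Site L} (hx : x ∈ σ) :
    HA JH JV h (σ.erase x) = HA JH JV h σ
      + JH * (spin σ (x + (1, 0)) + spin σ (x - (1, 0)))
      + JV * (spin σ (x + (0, 1)) + spin σ (x - (0, 1)))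
      + h := by
  have hx' : x ∉ σ.erase x := Finset.notMem_erase x σ
  have hins : insert x (σ.erase x) = σ := Finset.insert_erase hx
  have hsp : ∀ e : Site L, e ≠ 0 →
      spin (σ.erase x) (x + e) = spin σ (x + e) ∧ spin (σ.erase x) (x - e) = spin σ (x - e) := by
    intro e he
    constructor
    · simp [spin, Finset.mem_erase, add_ne_self he]
    · simp [spin, Finset.mem_erase, sub_ne_self he]
  have h1 := HA_insert (JH := JH) (JV := JV) (h := h) hL hx'
  rw [hins, (hsp _ (e10_ne_zero hL)).1, (hsp _ (e10_ne_zero hL)).2,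
    (hsp _ (e01_ne_zero hL)).1, (hsp _ (e01_ne_zero hL)).2] at h1
  linarith

end Aux

section Paths
variable {L : ℕ} [NeZero L]


lemma head_mem_of_isPath {σ σ' : Config L} {γ : List (Config L)} (hp : IsPath σ σ' γ) :
    σ ∈ γ := by
  obtain ⟨h1, -, -⟩ := hp
  cases γ with
  | nil => simp at h1
  | cons a l => simp at h1; simp [h1]

lemma commHeight_le {H : Config L → ℝ} {σ σ' : Config L} {γ : List (Config L)}
    (hp : IsPath σ σ' γ) {M : ℝ} (hM : ∀ η ∈ γ, H η ≤ M) : commHeight H σ σ' ≤ M := by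
  apply csInf_le
  · refine ⟨H σ, ?_⟩
    rintro M' ⟨γ', hp', hM'⟩
    exact hM' σ (head_mem_of_isPath hp')
  · exact ⟨γ, hp, hM⟩

lemma commHeight_ge {H : Config L → ℝ} {σ σ' : Config L}
    (hne : { M | ∃ γ : List (Config L), IsPath σ σ' γ ∧ ∀ η ∈ γ, H η ≤ M }.Nonempty) :
    H σ ≤ commHeight H σ σ' := by
  apply le_csInf hne
  rintro M ⟨γ, hp, hM⟩
  exact hM σ (head_mem_of_isPath hp)

lemma isPath_seq (g : ℕ → Config L) (n : ℕ)
    (hadj : ∀ s < n, Adjacent (g s) (g (s + 1))) :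
    IsPath (g 0) (g n) ((List.range (n + 1)).map g) := by
  refine ⟨?_, ?_, ?_⟩
  · rw [List.range_succ_eq_map]
    simp
  · rw [List.range_succ, List.map_append]
    simp
  · show List.IsChain _ _
    rw [List.isChain_map]
    exact (List.isChain_range_succ _ _).mpr hadj

lemma mem_seq {g : ℕ → Config L} {n : ℕ} {η : Config L}
    (hη : η ∈ (List.range (n + 1)).map g) : ∃ s ≤ n, η = g s := by
  simp only [List.mem_map, List.mem_range, Nat.lt_succ_iff] at hη
  obtain ⟨s, hs, he⟩ := hη
  exact ⟨s, hs, he.symm⟩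

/-- `addSeq σ pos s` : the configuration after inserting `pos 0, …, pos (s-1)`. -/
def addSeq (σ : Config L) (pos : ℕ → Site L) (s : ℕ) : Config L :=
  σ ∪ (Finset.range s).image pos

lemma addSeq_zero (σ : Config L) (pos : ℕ → Site L) : addSeq σ pos 0 = σ := by
  simp [addSeq]

lemma mem_addSeq {σ : Config L} {pos : ℕ → Site L} {s : ℕ} {z : Site L} :
    z ∈ addSeq σ pos s ↔ z ∈ σ ∨ ∃ t < s, pos t = z := by
  simp [addSeq]

lemma addSeq_succ (σ : Config L) (pos : ℕ → Site L) (s : ℕ) :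
    addSeq σ pos (s + 1) = insert (pos s) (addSeq σ pos s) := by
  simp [addSeq, Finset.range_add_one, Finset.image_insert, Finset.union_insert]

lemma adj_addSeq {σ : Config L} {pos : ℕ → Site L} {s : ℕ}
    (hnot : pos s ∉ addSeq σ pos s) : Adjacent (addSeq σ pos s) (addSeq σ pos (s + 1)) :=
  ⟨pos s, by rw [addSeq_succ, flipSpin, if_neg hnot]⟩

/-- `delSeq σ pos s` : the configuration after erasing `pos 0, …, pos (s-1)`. -/
def delSeq (σ : Config L) (pos : ℕ → Site L) (s : ℕ) : Config L :=
  σ \ (Finset.range s).image pos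

lemma delSeq_zero (σ : Config L) (pos : ℕ → Site L) : delSeq σ pos 0 = σ := by
  simp [delSeq]

lemma mem_delSeq {σ : Config L} {pos : ℕ → Site L} {s : ℕ} {z : Site L} :
    z ∈ delSeq σ pos s ↔ z ∈ σ ∧ ∀ t < s, pos t ≠ z := by
  simp only [delSeq, Finset.mem_sdiff, Finset.mem_image, Finset.mem_range, not_exists, not_and]

lemma delSeq_succ (σ : Config L) (pos : ℕ → Site L) (s : ℕ) :
    delSeq σ pos (s + 1) = (delSeq σ pos s).erase (pos s) := by
  ext z
  simp only [delSeq, Finset.mem_sdiff, Finset.mem_image, Finset.mem_range, Finset.mem_erase]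
  constructor
  · rintro ⟨hz, hn⟩
    refine ⟨fun hcon => hn ⟨s, by omega, hcon.symm⟩, hz, ?_⟩
    rintro ⟨t, ht, he⟩
    exact hn ⟨t, by omega, he⟩
  · rintro ⟨hne, hz, hn⟩
    refine ⟨hz, ?_⟩
    rintro ⟨t, ht, he⟩
    rcases Nat.lt_succ_iff_lt_or_eq.mp ht with h | h
    · exact hn ⟨t, h, he⟩
    · exact hne (h ▸ he.symm)

lemma adj_delSeq {σ : Config L} {pos : ℕ → Site L} {s : ℕ}
    (hmem : pos s ∈ delSeq σ pos s) : Adjacent (delSeq σ pos s) (delSeq σ pos (s + 1)) :=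
  ⟨pos s, by rw [delSeq_succ, flipSpin, if_pos hmem]⟩

end Paths

section NatHelpers

lemma nat_boundary {Q : ℕ → Prop} :
    ∀ d a, Q a → ¬ Q (a + d) → ∃ t, a ≤ t ∧ t < a + d ∧ Q t ∧ ¬ Q (t + 1) := by
  intro d
  induction d with
  | zero => intro a hQ hnQ; exact absurd hQ hnQ
  | succ d ih =>
    intro a hQ hnQ
    by_cases hd : Q (a + d)
    · exact ⟨a + d, by omega, by omega, hd, by rwa [show a + d + 1 = a + (d+1) by omega]⟩
    · obtain ⟨t, h1, h2, h3, h4⟩ := ih a hQ hd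
      exact ⟨t, h1, by omega, h3, h4⟩

lemma nat_boundary' {Q : ℕ → Prop} {t₁ t₂ : ℕ} (h1 : Q t₁) (h2 : ¬ Q t₂) :
    (∃ t, t₁ ≤ t ∧ t < t₂ ∧ Q t ∧ ¬ Q (t + 1)) ∨
    (∃ t, t₂ ≤ t ∧ t < t₁ ∧ ¬ Q t ∧ Q (t + 1)) := by
  rcases lt_trichotomy t₁ t₂ with hlt | heq | hgt
  · left
    obtain ⟨t, ha, hb, hc, hd⟩ := nat_boundary (t₂ - t₁) t₁ h1 (by rwa [show t₁ + (t₂ - t₁) = t₂ by omega])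
    exact ⟨t, ha, by omega, hc, hd⟩
  · exact absurd (heq ▸ h1) h2
  · right
    obtain ⟨t, ha, hb, hc, hd⟩ := nat_boundary (Q := fun t => ¬ Q t) (t₁ - t₂) t₂ h2
      (by rw [show t₂ + (t₁ - t₂) = t₁ by omega]; exact not_not_intro h1)
    exact ⟨t, ha, by omega, hc, not_not.mp hd⟩

end NatHelpers

section RunExtract
variable {L : ℕ} [NeZero L]

lemma zmod_natCast_inj {s t : ℕ} (hs : s < L) (ht : t < L)
    (h : ((s : ℕ) : ZMod L) = ((t : ℕ) : ZMod L)) : s = t := by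
  have h1 := ZMod.val_cast_of_lt hs
  have h2 := ZMod.val_cast_of_lt ht
  rw [h] at h1
  omega

lemma run_extract {P : ZMod L → Prop} {i₀ m₀ : ZMod L} (hP : P i₀) (hnP : ¬ P m₀) :
    ∃ (b : ZMod L) (m : ℕ), 1 ≤ m ∧ m ≤ L - 1 ∧ (∀ t < m, P (b + (t : ℕ))) ∧
      ¬ P (b - 1) ∧ ¬ P (b + (m : ℕ)) := by
  classical
  have hL1 : 1 ≤ L := Nat.one_le_iff_ne_zero.mpr (NeZero.ne L)
  set u : ℕ := (i₀ - m₀).val with hu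
  have hval : ((u : ℕ) : ZMod L) = i₀ - m₀ := ZMod.natCast_zmod_val (i₀ - m₀)
  have hio : m₀ + ((u : ℕ) : ZMod L) = i₀ := by rw [hval]; ring
  have huL : u < L := ZMod.val_lt _
  have hu1 : 1 ≤ u := by
    rcases Nat.eq_zero_or_pos u with h0 | h0
    · exfalso
      apply hnP
      rw [← hio, h0] at hP
      simpa using hP
    · exact h0
  -- upward find
  have hq : ∃ n : ℕ, ¬ P (m₀ + ((u + n + 1 : ℕ) : ZMod L)) := by
    refine ⟨L - 1 - u, ?_⟩
    have : ((u + (L - 1 - u) + 1 : ℕ) : ZMod L) = 0 := by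
      rw [show u + (L - 1 - u) + 1 = L by omega]
      exact ZMod.natCast_self L
    rwa [this, add_zero]
  set q := Nat.find hq with hqdef
  have hqspec : ¬ P (m₀ + ((u + q + 1 : ℕ) : ZMod L)) := Nat.find_spec hq
  have hqmin : ∀ j < q, P (m₀ + ((u + j + 1 : ℕ) : ZMod L)) := fun j hj =>
    not_not.mp (Nat.find_min hq hj)
  have hqle : q ≤ L - 1 - u := Nat.find_le (by
    have : ((u + (L - 1 - u) + 1 : ℕ) : ZMod L) = 0 := by
      rw [show u + (L - 1 - u) + 1 = L by omega]
      exact ZMod.natCast_self L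
    rwa [this, add_zero])
  -- downward find
  have hp : ∃ n : ℕ, ¬ P (m₀ + ((u - (n + 1) : ℕ) : ZMod L)) := by
    refine ⟨u - 1, ?_⟩
    rw [show u - (u - 1 + 1) = 0 by omega]
    simpa using hnP
  set p := Nat.find hp with hpdef
  have hpspec : ¬ P (m₀ + ((u - (p + 1) : ℕ) : ZMod L)) := Nat.find_spec hp
  have hpmin : ∀ j < p, P (m₀ + ((u - (j + 1) : ℕ) : ZMod L)) := fun j hj =>
    not_not.mp (Nat.find_min hp hj)
  have hple : p ≤ u - 1 := Nat.find_le (by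
    rw [show u - (u - 1 + 1) = 0 by omega]
    simpa using hnP)
  refine ⟨m₀ + ((u - p : ℕ) : ZMod L), p + q + 1, by omega, by omega, ?_, ?_, ?_⟩
  · intro t ht
    have hcast : m₀ + ((u - p : ℕ) : ZMod L) + ((t : ℕ) : ZMod L)
        = m₀ + ((u - p + t : ℕ) : ZMod L) := by push_cast; ring
    rw [hcast]
    rcases lt_trichotomy t p with hc | hc | hc
    · have := hpmin (p - t - 1) (by omega)
      rwa [show u - (p - t - 1 + 1) = u - p + t by omega] at this
    · rw [hc, show u - p + p = u by omega, hio]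
      exact hP
    · have := hqmin (t - p - 1) (by omega)
      rwa [show u + (t - p - 1) + 1 = u - p + t by omega] at this
  · have hcast : m₀ + ((u - p : ℕ) : ZMod L) - 1 = m₀ + ((u - (p + 1) : ℕ) : ZMod L) := by
      rw [show u - p = (u - (p + 1)) + 1 by omega]
      push_cast; ring
    rw [hcast]
    exact hpspec
  · have hcast : m₀ + ((u - p : ℕ) : ZMod L) + ((p + q + 1 : ℕ) : ZMod L)
      = m₀ + ((u + q + 1 : ℕ) : ZMod L) := by
      rw [show u + q + 1 = (u - p) + (p + q + 1) by omega]
      push_cast; ring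
    rw [hcast]
    exact hqspec

end RunExtract

section Steps
variable {L : ℕ} [NeZero L] {JH JV h : ℝ} {τ σ : Config L}

lemma step_insert_h (hL : 2 ≤ L) (hJH : 0 < JH) (hJV : 0 < JV) {x : Site L} (hx : x ∉ τ)
    (hhor : x + (1, 0) ∈ τ ∨ x - (1, 0) ∈ τ) (hver : x + (0, 1) ∈ τ ∨ x - (0, 1) ∈ τ) :
    HA JH JV h (insert x τ) ≤ HA JH JV h τ - h := by
  rw [HA_insert hL hx]
  have b1 := neg_one_le_spin τ (x + (1, 0)); have b2 := neg_one_le_spin τ (x - (1, 0))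
  have b3 := neg_one_le_spin τ (x + (0, 1)); have b4 := neg_one_le_spin τ (x - (0, 1))
  rcases hhor with hh1 | hh1 <;> rcases hver with hv1 | hv1 <;>
    rw [spin_of_mem hh1, spin_of_mem hv1] <;> nlinarith

lemma step_insert_v (hL : 2 ≤ L) (hJH : 0 < JH) (hJV : 0 < JV) {x : Site L} (hx : x ∉ τ)
    (hhor : x + (1, 0) ∈ τ ∨ x - (1, 0) ∈ τ) :
    HA JH JV h (insert x τ) ≤ HA JH JV h τ + 2 * JV - h := by
  rw [HA_insert hL hx]
  have b1 := neg_one_le_spin τ (x + (1, 0)); have b2 := neg_one_le_spin τ (x - (1, 0))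
  have b3 := neg_one_le_spin τ (x + (0, 1)); have b4 := neg_one_le_spin τ (x - (0, 1))
  have c3 := spin_le_one τ (x + (0, 1)); have c4 := spin_le_one τ (x - (0, 1))
  rcases hhor with hh1 | hh1 <;> rw [spin_of_mem hh1] <;> nlinarith

lemma step_insert_vh (hL : 2 ≤ L) (hJH : 0 < JH) (hJV : 0 < JV) {x : Site L} (hx : x ∉ τ)
    (hver : x + (0, 1) ∈ τ ∨ x - (0, 1) ∈ τ) :
    HA JH JV h (insert x τ) ≤ HA JH JV h τ + 2 * JH - h := by
  rw [HA_insert hL hx]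
  have b1 := neg_one_le_spin τ (x + (1, 0)); have b2 := neg_one_le_spin τ (x - (1, 0))
  have b3 := neg_one_le_spin τ (x + (0, 1)); have b4 := neg_one_le_spin τ (x - (0, 1))
  have c1 := spin_le_one τ (x + (1, 0)); have c2 := spin_le_one τ (x - (1, 0))
  rcases hver with hv1 | hv1 <;> rw [spin_of_mem hv1] <;> nlinarith

lemma step_insert_wrapcol (hL : 2 ≤ L) (hJH : 0 < JH) (hJV : 0 < JV) {x : Site L} (hx : x ∉ τ)
    (hhor : x + (1, 0) ∈ τ ∨ x - (1, 0) ∈ τ)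
    (hv1 : x + (0, 1) ∈ τ) (hv2 : x - (0, 1) ∈ τ) :
    HA JH JV h (insert x τ) ≤ HA JH JV h τ - 2 * JV - h := by
  rw [HA_insert hL hx]
  have b1 := neg_one_le_spin τ (x + (1, 0)); have b2 := neg_one_le_spin τ (x - (1, 0))
  rw [spin_of_mem hv1, spin_of_mem hv2]
  rcases hhor with hh1 | hh1 <;> rw [spin_of_mem hh1] <;> nlinarith

lemma step_insert_wraprow (hL : 2 ≤ L) (hJH : 0 < JH) (hJV : 0 < JV) {x : Site L} (hx : x ∉ τ)
    (hver : x + (0, 1) ∈ τ ∨ x - (0, 1) ∈ τ)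
    (hh1 : x + (1, 0) ∈ τ) (hh2 : x - (1, 0) ∈ τ) :
    HA JH JV h (insert x τ) ≤ HA JH JV h τ - 2 * JH - h := by
  rw [HA_insert hL hx]
  have b1 := neg_one_le_spin τ (x + (0, 1)); have b2 := neg_one_le_spin τ (x - (0, 1))
  rw [spin_of_mem hh1, spin_of_mem hh2]
  rcases hver with hv1 | hv1 <;> rw [spin_of_mem hv1] <;> nlinarith

lemma step_erase (hL : 2 ≤ L) (hJH : 0 < JH) (hJV : 0 < JV) {x : Site L} (hx : x ∈ τ)
    (hr : x + (1, 0) ∉ τ ∨ x - (1, 0) ∉ τ) (hu : x + (0, 1) ∉ τ ∨ x - (0, 1) ∉ τ) :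
    HA JH JV h (τ.erase x) ≤ HA JH JV h τ + h := by
  rw [HA_erase hL hx]
  have c1 := spin_le_one τ (x + (1, 0)); have c2 := spin_le_one τ (x - (1, 0))
  have c3 := spin_le_one τ (x + (0, 1)); have c4 := spin_le_one τ (x - (0, 1))
  rcases hr with hh1 | hh1 <;> rcases hu with hv1 | hv1 <;>
    rw [spin_of_not_mem hh1, spin_of_not_mem hv1] <;> nlinarith

lemma step_erase_bot (hL : 2 ≤ L) (hJH : 0 < JH) (hJV : 0 < JV) {x : Site L} (hx : x ∈ τ)
    (hr : x + (1, 0) ∉ τ ∨ x - (1, 0) ∉ τ)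
    (hu1 : x + (0, 1) ∉ τ) (hu2 : x - (0, 1) ∉ τ) :
    HA JH JV h (τ.erase x) ≤ HA JH JV h τ + h - 2 * JV := by
  rw [HA_erase hL hx]
  have c1 := spin_le_one τ (x + (1, 0)); have c2 := spin_le_one τ (x - (1, 0))
  rw [spin_of_not_mem hu1, spin_of_not_mem hu2]
  rcases hr with hh1 | hh1 <;> rw [spin_of_not_mem hh1] <;> nlinarith

lemma flip_insert {x : Site L} (hx : x ∉ σ) : flipSpin σ x = insert x σ := by
  rw [flipSpin, if_neg hx]

lemma no_inner_corner (hL : 2 ≤ L) (hJH : 0 < JH) (hJV : 0 < JV) (hh0 : 0 < h)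
    (hmin : ∀ x, HA JH JV h σ ≤ HA JH JV h (flipSpin σ x))
    {y : Site L} (hy : y ∉ σ)
    (hH : y + (1, 0) ∈ σ ∨ y - (1, 0) ∈ σ) (hV : y + (0, 1) ∈ σ ∨ y - (0, 1) ∈ σ) :
    False := by
  have hb := hmin y
  rw [flip_insert hy] at hb
  have := step_insert_h (τ := σ) (h := h) hL hJH hJV hy hH hV
  linarith

lemma site_eq {p q p' q' : ZMod L} : ((p, q) : Site L) = (p', q') ↔ p = p' ∧ q = q' := by
  simp [Prod.ext_iff]

lemma site_add10 (p q : ZMod L) : ((p, q) : Site L) + (1, 0) = (p + 1, q) := by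
  simp [Prod.ext_iff]

lemma site_sub10 (p q : ZMod L) : ((p, q) : Site L) - (1, 0) = (p - 1, q) := by
  simp [Prod.ext_iff]

lemma site_add01 (p q : ZMod L) : ((p, q) : Site L) + (0, 1) = (p, q + 1) := by
  simp [Prod.ext_iff]

lemma site_sub01 (p q : ZMod L) : ((p, q) : Site L) - (0, 1) = (p, q - 1) := by
  simp [Prod.ext_iff]

lemma cast_succ (b : ZMod L) (t : ℕ) : b + ((t : ℕ) : ZMod L) + 1 = b + (((t + 1 : ℕ)) : ZMod L) := by
  push_cast; ring

lemma cast_pred (b : ZMod L) {t : ℕ} (ht : 1 ≤ t) :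
    b + ((t : ℕ) : ZMod L) - 1 = b + (((t - 1 : ℕ)) : ZMod L) := by
  rw [show t = (t - 1) + 1 by omega]
  push_cast; ring_nf

lemma col_dichotomy (hL : 2 ≤ L) (hJH : 0 < JH) (hJV : 0 < JV) (hh0 : 0 < h)
    (hmin : ∀ x, HA JH JV h σ ≤ HA JH JV h (flipSpin σ x)) (c b : ZMod L) (r : ℕ)
    (hfull : ∀ t < r, ((c, b + (t : ℕ)) : Site L) ∈ σ) :
    (∀ t < r, ((c + 1, b + (t : ℕ)) : Site L) ∈ σ) ∨
    (∀ t < r, ((c + 1, b + (t : ℕ)) : Site L) ∉ σ) := by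
  by_contra hcon
  push_neg at hcon
  obtain ⟨⟨t₂, ht₂r, ht₂⟩, ⟨t₁, ht₁r, ht₁⟩⟩ := hcon
  rcases nat_boundary' (Q := fun t => ((c + 1, b + (t : ℕ)) : Site L) ∈ σ) ht₁ ht₂ with
    ⟨t, hta, htb, htQ, htnQ⟩ | ⟨t, hta, htb, htnQ, htQ⟩
  · -- Q t, ¬ Q (t+1), t + 1 ≤ t₂ < r
    refine no_inner_corner hL hJH hJV hh0 hmin (y := (c + 1, b + ((t + 1 : ℕ) : ZMod L))) htnQ ?_ ?_
    · right
      rw [site_sub10, add_sub_cancel_right]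
      exact hfull (t + 1) (by omega)
    · right
      rw [site_sub01, ← cast_succ, add_sub_cancel_right]
      exact htQ
  · -- ¬ Q t, Q (t+1), t < t₁ < r
    refine no_inner_corner hL hJH hJV hh0 hmin (y := (c + 1, b + ((t : ℕ) : ZMod L))) htnQ ?_ ?_
    · right
      rw [site_sub10, add_sub_cancel_right]
      exact hfull t (by omega)
    · left
      rw [site_add01, cast_succ]
      exact htQ

lemma col_step_bounds (hL : 2 ≤ L) (hJH : 0 < JH) (hJV : 0 < JV) (hh0 : 0 < h)
    (hmin : ∀ x, HA JH JV h σ ≤ HA JH JV h (flipSpin σ x)) (c b : ZMod L) (r : ℕ) (hr : 1 ≤ r)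
    (hfullc : ∀ t < r, ((c, b + (t : ℕ)) : Site L) ∈ σ)
    (htop : ((c, b + (r : ℕ)) : Site L) ∉ σ) (hbot : ((c, b - 1) : Site L) ∉ σ)
    (hfullc1 : ∀ t < r, ((c + 1, b + (t : ℕ)) : Site L) ∈ σ) :
    ((c + 1, b + (r : ℕ)) : Site L) ∉ σ ∧ ((c + 1, b - 1) : Site L) ∉ σ := by
  constructor
  · intro hmem
    refine no_inner_corner hL hJH hJV hh0 hmin (y := (c, b + ((r : ℕ) : ZMod L))) htop ?_ ?_
    · left
      rw [site_add10]
      exact hmem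
    · right
      rw [site_sub01, cast_pred b hr]
      exact hfullc (r - 1) (by omega)
  · intro hmem
    refine no_inner_corner hL hJH hJV hh0 hmin (y := (c, b - 1)) hbot ?_ ?_
    · left
      rw [site_add10]
      exact hmem
    · left
      rw [site_add01, sub_add_cancel]
      have := hfullc 0 hr
      simpa using this

end Steps

section Constructions
variable {L : ℕ} [NeZero L] {JH JV h : ℝ}

lemma addSeq_supset (σ : Config L) (pos : ℕ → Site L) (s : ℕ) : σ ⊆ addSeq σ pos s :=
  Finset.subset_union_left

lemma commHeight_addSeq {σ : Config L} {pos : ℕ → Site L} {n : ℕ}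
    (hnot : ∀ s < n, pos s ∉ addSeq σ pos s) {M : ℝ}
    (hM : ∀ s ≤ n, HA JH JV h (addSeq σ pos s) ≤ M) :
    commHeight (HA JH JV h) σ (addSeq σ pos n) ≤ M := by
  have hpath := isPath_seq (addSeq σ pos) n (fun s hs => adj_addSeq (hnot s hs))
  rw [addSeq_zero] at hpath
  apply commHeight_le hpath
  intro η hη
  obtain ⟨s, hs, rfl⟩ := mem_seq hη
  exact hM s hs

lemma commHeight_delSeq {σ : Config L} {pos : ℕ → Site L} {n : ℕ}
    (hmem : ∀ s < n, pos s ∈ delSeq σ pos s) {M : ℝ}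
    (hM : ∀ s ≤ n, HA JH JV h (delSeq σ pos s) ≤ M) :
    commHeight (HA JH JV h) σ (delSeq σ pos n) ≤ M := by
  have hpath := isPath_seq (delSeq σ pos) n (fun s hs => adj_delSeq (hmem s hs))
  rw [delSeq_zero] at hpath
  apply commHeight_le hpath
  intro η hη
  obtain ⟨s, hs, rfl⟩ := mem_seq hη
  exact hM s hs

/-- Fill a bounded gap in the column right of a full column. -/
lemma fill_gap_col (hL : 2 ≤ L) (hJH : 0 < JH) (hJV : 0 < JV) (hh0 : 0 < h)
    {σ : Config L} (c : ZMod L)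
    (hc : ∀ i : ZMod L, ((c, i) : Site L) ∈ σ)
    (b : ZMod L) (m : ℕ) (hm1 : 1 ≤ m) (hmL : m ≤ L - 1)
    (hgap : ∀ t < m, ((c + 1, b + (t : ℕ)) : Site L) ∉ σ)
    (hbelow : ((c + 1, b - 1) : Site L) ∈ σ) :
    ∃ σ', HA JH JV h σ' < HA JH JV h σ ∧
      commHeight (HA JH JV h) σ σ' ≤ HA JH JV h σ + 2 * JH := by
  set pos : ℕ → Site L := fun t => ((c + 1, b + (t : ℕ)) : Site L) with hpos
  have hinj : ∀ s < m, ∀ t < m, pos s = pos t → s = t := by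
    intro s hs t ht he
    rw [hpos] at he
    simp only [site_eq] at he
    have hcast : ((s : ℕ) : ZMod L) = ((t : ℕ) : ZMod L) := add_left_cancel he.2
    exact zmod_natCast_inj (by omega) (by omega) hcast
  have hnot : ∀ s < m, pos s ∉ addSeq σ pos s := by
    intro s hs hcon
    rcases mem_addSeq.mp hcon with hin | ⟨t, ht, he⟩
    · exact hgap s hs hin
    · exact absurd (hinj t (by omega) s hs he) (by omega)
  have hstep : ∀ s < m,
      HA JH JV h (addSeq σ pos (s + 1)) ≤ HA JH JV h (addSeq σ pos s) - h := by
    intro s hs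
    rw [addSeq_succ]
    apply step_insert_h hL hJH hJV (hnot s hs)
    · right
      rw [hpos]
      simp only [site_sub10, add_sub_cancel_right]
      exact addSeq_supset σ pos s (hc _)
    · right
      rcases Nat.eq_zero_or_pos s with h0 | h0
      · rw [h0, hpos]
        simp only [site_sub01]
        apply addSeq_supset σ pos 0
        simpa using hbelow
      · rw [hpos]
        simp only [site_sub01]
        rw [cast_pred b h0]
        exact mem_addSeq.mpr (Or.inr ⟨s - 1, by omega, rfl⟩)
  have claim : ∀ s ≤ m, HA JH JV h (addSeq σ pos s) ≤ HA JH JV h σ - s * h := by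
    intro s
    induction s with
    | zero => intro _; rw [addSeq_zero]; simp
    | succ s ih =>
      intro hs
      have h1 := ih (by omega)
      have h2 := hstep s (by omega)
      push_cast
      push_cast at h1
      linarith
  refine ⟨addSeq σ pos m, ?_, ?_⟩
  · have := claim m le_rfl
    have hmh : (1 : ℝ) ≤ (m : ℝ) := by exact_mod_cast hm1
    nlinarith
  · apply commHeight_addSeq hnot
    intro s hs
    have := claim s hs
    have : (0:ℝ) ≤ s * h := by positivity
    nlinarith [claim s hs]

/-- Fill the empty column right of a full column. -/
lemma fill_empty_col (hL : 2 ≤ L) (hJH : 0 < JH) (hJV : 0 < JV) (hh0 : 0 < h) (hJHV : JV < JH)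
    {σ : Config L} (c : ZMod L)
    (hc : ∀ i : ZMod L, ((c, i) : Site L) ∈ σ)
    (hempty : ∀ i : ZMod L, ((c + 1, i) : Site L) ∉ σ) :
    ∃ σ', HA JH JV h σ' < HA JH JV h σ ∧
      commHeight (HA JH JV h) σ σ' ≤ HA JH JV h σ + 2 * JH := by
  set pos : ℕ → Site L := fun t => ((c + 1, (0 : ZMod L) + (t : ℕ)) : Site L) with hpos
  have hinj : ∀ s < L, ∀ t < L, pos s = pos t → s = t := by
    intro s hs t ht he
    rw [hpos] at he
    simp only [site_eq] at he
    exact zmod_natCast_inj hs ht (add_left_cancel he.2)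
  have hnot : ∀ s < L, pos s ∉ addSeq σ pos s := by
    intro s hs hcon
    rcases mem_addSeq.mp hcon with hin | ⟨t, ht, he⟩
    · exact hempty _ hin
    · exact absurd (hinj t (by omega) s hs he) (by omega)
  have hhor : ∀ s (τ : Config L), σ ⊆ τ → pos s - (1, 0) ∈ τ := by
    intro s τ hsub
    apply hsub
    rw [hpos]
    simp only [site_sub10, add_sub_cancel_right]
    exact hc _
  have hstep0 : HA JH JV h (addSeq σ pos 1) ≤ HA JH JV h σ + 2 * JV - h := by
    have := step_insert_v (τ := addSeq σ pos 0) (h := h) hL hJH hJV (hnot 0 (by omega))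
      (Or.inr (hhor 0 _ (addSeq_supset σ pos 0)))
    rw [← addSeq_succ] at this
    rwa [addSeq_zero σ pos] at this
  have hstep : ∀ s, 1 ≤ s → s < L →
      HA JH JV h (addSeq σ pos (s + 1)) ≤ HA JH JV h (addSeq σ pos s) - h := by
    intro s h1 h2
    rw [addSeq_succ]
    apply step_insert_h hL hJH hJV (hnot s h2)
    · exact Or.inr (hhor s _ (addSeq_supset σ pos s))
    · right
      rw [hpos]
      simp only [site_sub01]
      rw [cast_pred _ h1]
      exact mem_addSeq.mpr (Or.inr ⟨s - 1, by omega, rfl⟩)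
  have claim : ∀ s, 1 ≤ s → s ≤ L → HA JH JV h (addSeq σ pos s)
      ≤ HA JH JV h σ + 2 * JV - s * h := by
    intro s
    induction s with
    | zero => omega
    | succ s ih =>
      intro _ hs
      rcases Nat.eq_zero_or_pos s with h0 | h0
      · rw [h0]
        simpa using hstep0
      · have h1 := ih h0 (by omega)
        have h2 := hstep s h0 (by omega)
        push_cast
        push_cast at h1
        linarith
  -- last step has both vertical neighbours present
  have hlast : HA JH JV h (addSeq σ pos L) ≤ HA JH JV h (addSeq σ pos (L - 1)) - 2 * JV - h := by
    have hL1 : L - 1 + 1 = L := by omega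
    have key : HA JH JV h (addSeq σ pos (L - 1 + 1))
        ≤ HA JH JV h (addSeq σ pos (L - 1)) - 2 * JV - h := by
      rw [addSeq_succ]
      apply step_insert_wrapcol hL hJH hJV (hnot (L - 1) (by omega))
      · exact Or.inr (hhor (L - 1) _ (addSeq_supset σ pos (L - 1)))
      · rw [hpos]
        simp only [site_add01]
        rw [cast_succ, show (((L - 1 + 1 : ℕ)) : ZMod L) = ((0 : ℕ) : ZMod L) by
          rw [hL1]; simp [ZMod.natCast_self]]
        exact mem_addSeq.mpr (Or.inr ⟨0, by omega, rfl⟩)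
      · rw [hpos]
        simp only [site_sub01]
        rw [cast_pred _ (by omega : 1 ≤ L - 1)]
        exact mem_addSeq.mpr (Or.inr ⟨L - 1 - 1, by omega, rfl⟩)
    rwa [hL1] at key
  refine ⟨addSeq σ pos L, ?_, ?_⟩
  · have h1 := claim (L - 1) (by omega) (by omega)
    have hcast : ((L - 1 : ℕ) : ℝ) = (L : ℝ) - 1 := by
      have : 1 ≤ L := by omega
      push_cast [this]
      ring
    rw [hcast] at h1
    have hLpos : (1 : ℝ) ≤ (L : ℝ) := by exact_mod_cast (by omega : 1 ≤ L)
    nlinarith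
  · apply commHeight_addSeq hnot
    intro s hs
    rcases Nat.eq_zero_or_pos s with h0 | h0
    · rw [h0, addSeq_zero]
      nlinarith
    · rcases Nat.lt_or_ge s L with hsL | hsL
      · have := claim s h0 (by omega)
        have hsh : (0:ℝ) ≤ s * h := by positivity
        nlinarith
      · have hsL' : s = L := by omega
        rw [hsL']
        have h1 := claim (L - 1) (by omega) (by omega)
        have hsh : (0:ℝ) ≤ ((L - 1 : ℕ) : ℝ) * h := by positivity
        nlinarith
end Constructions

section Constructions2
variable {L : ℕ} [NeZero L] {JH JV h : ℝ}

/-- Fill a bounded gap in the row above a full row. -/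
lemma fill_gap_row (hL : 2 ≤ L) (hJH : 0 < JH) (hJV : 0 < JV) (hh0 : 0 < h)
    {σ : Config L} (c : ZMod L)
    (hc : ∀ i : ZMod L, ((i, c) : Site L) ∈ σ)
    (b : ZMod L) (m : ℕ) (hm1 : 1 ≤ m) (hmL : m ≤ L - 1)
    (hgap : ∀ t < m, ((b + (t : ℕ), c + 1) : Site L) ∉ σ)
    (hbelow : ((b - 1, c + 1) : Site L) ∈ σ) :
    ∃ σ', HA JH JV h σ' < HA JH JV h σ ∧
      commHeight (HA JH JV h) σ σ' ≤ HA JH JV h σ + 2 * JH := by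
  set pos : ℕ → Site L := fun t => ((b + (t : ℕ), c + 1) : Site L) with hpos
  have hinj : ∀ s < m, ∀ t < m, pos s = pos t → s = t := by
    intro s hs t ht he
    rw [hpos] at he
    simp only [site_eq] at he
    have hcast : ((s : ℕ) : ZMod L) = ((t : ℕ) : ZMod L) := add_left_cancel he.1
    exact zmod_natCast_inj (by omega) (by omega) hcast
  have hnot : ∀ s < m, pos s ∉ addSeq σ pos s := by
    intro s hs hcon
    rcases mem_addSeq.mp hcon with hin | ⟨t, ht, he⟩
    · exact hgap s hs hin
    · exact absurd (hinj t (by omega) s hs he) (by omega)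
  have hstep : ∀ s < m,
      HA JH JV h (addSeq σ pos (s + 1)) ≤ HA JH JV h (addSeq σ pos s) - h := by
    intro s hs
    rw [addSeq_succ]
    apply step_insert_h hL hJH hJV (hnot s hs)
    · right
      rcases Nat.eq_zero_or_pos s with h0 | h0
      · rw [h0, hpos]
        simp only [site_sub10]
        apply addSeq_supset σ pos 0
        simpa using hbelow
      · rw [hpos]
        simp only [site_sub10]
        rw [cast_pred b h0]
        exact mem_addSeq.mpr (Or.inr ⟨s - 1, by omega, rfl⟩)
    · right
      rw [hpos]
      simp only [site_sub01, add_sub_cancel_right]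
      exact addSeq_supset σ pos s (hc _)
  have claim : ∀ s ≤ m, HA JH JV h (addSeq σ pos s) ≤ HA JH JV h σ - s * h := by
    intro s
    induction s with
    | zero => intro _; rw [addSeq_zero]; simp
    | succ s ih =>
      intro hs
      have h1 := ih (by omega)
      have h2 := hstep s (by omega)
      push_cast
      push_cast at h1
      linarith
  refine ⟨addSeq σ pos m, ?_, ?_⟩
  · have := claim m le_rfl
    have hmh : (1 : ℝ) ≤ (m : ℝ) := by exact_mod_cast hm1
    nlinarith
  · apply commHeight_addSeq hnot
    intro s hs
    have h1 := claim s hs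
    have h2 : (0:ℝ) ≤ s * h := by positivity
    nlinarith

/-- Fill the empty row above a full row. -/
lemma fill_empty_row (hL : 2 ≤ L) (hJH : 0 < JH) (hJV : 0 < JV) (hh0 : 0 < h)
    {σ : Config L} (c : ZMod L)
    (hc : ∀ i : ZMod L, ((i, c) : Site L) ∈ σ)
    (hempty : ∀ i : ZMod L, ((i, c + 1) : Site L) ∉ σ) :
    ∃ σ', HA JH JV h σ' < HA JH JV h σ ∧
      commHeight (HA JH JV h) σ σ' ≤ HA JH JV h σ + 2 * JH := by
  set pos : ℕ → Site L := fun t => (((0 : ZMod L) + (t : ℕ), c + 1) : Site L) with hpos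
  have hinj : ∀ s < L, ∀ t < L, pos s = pos t → s = t := by
    intro s hs t ht he
    rw [hpos] at he
    simp only [site_eq] at he
    exact zmod_natCast_inj hs ht (add_left_cancel he.1)
  have hnot : ∀ s < L, pos s ∉ addSeq σ pos s := by
    intro s hs hcon
    rcases mem_addSeq.mp hcon with hin | ⟨t, ht, he⟩
    · exact hempty _ hin
    · exact absurd (hinj t (by omega) s hs he) (by omega)
  have hver : ∀ s (τ : Config L), σ ⊆ τ → pos s - (0, 1) ∈ τ := by
    intro s τ hsub
    apply hsub
    rw [hpos]
    simp only [site_sub01, add_sub_cancel_right]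
    exact hc _
  have hstep0 : HA JH JV h (addSeq σ pos 1) ≤ HA JH JV h σ + 2 * JH - h := by
    have key := step_insert_vh (τ := addSeq σ pos 0) (h := h) hL hJH hJV (hnot 0 (by omega))
      (Or.inr (hver 0 _ (addSeq_supset σ pos 0)))
    rw [← addSeq_succ] at key
    rwa [addSeq_zero σ pos] at key
  have hstep : ∀ s, 1 ≤ s → s < L →
      HA JH JV h (addSeq σ pos (s + 1)) ≤ HA JH JV h (addSeq σ pos s) - h := by
    intro s h1 h2
    rw [addSeq_succ]
    apply step_insert_h hL hJH hJV (hnot s h2)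
    · right
      rw [hpos]
      simp only [site_sub10]
      rw [cast_pred _ h1]
      exact mem_addSeq.mpr (Or.inr ⟨s - 1, by omega, rfl⟩)
    · exact Or.inr (hver s _ (addSeq_supset σ pos s))
  have claim : ∀ s, 1 ≤ s → s ≤ L → HA JH JV h (addSeq σ pos s)
      ≤ HA JH JV h σ + 2 * JH - s * h := by
    intro s
    induction s with
    | zero => omega
    | succ s ih =>
      intro _ hs
      rcases Nat.eq_zero_or_pos s with h0 | h0
      · rw [h0]
        simpa using hstep0
      · have h1 := ih h0 (by omega)
        have h2 := hstep s h0 (by omega)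
        push_cast
        push_cast at h1
        linarith
  have hlast : HA JH JV h (addSeq σ pos L) ≤ HA JH JV h (addSeq σ pos (L - 1)) - 2 * JH - h := by
    have hL1 : L - 1 + 1 = L := by omega
    have key : HA JH JV h (addSeq σ pos (L - 1 + 1))
        ≤ HA JH JV h (addSeq σ pos (L - 1)) - 2 * JH - h := by
      rw [addSeq_succ]
      apply step_insert_wraprow hL hJH hJV (hnot (L - 1) (by omega))
      · exact Or.inr (hver (L - 1) _ (addSeq_supset σ pos (L - 1)))
      · rw [hpos]
        simp only [site_add10]
        rw [cast_succ, show (((L - 1 + 1 : ℕ)) : ZMod L) = ((0 : ℕ) : ZMod L) by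
          rw [hL1]; simp [ZMod.natCast_self]]
        exact mem_addSeq.mpr (Or.inr ⟨0, by omega, rfl⟩)
      · rw [hpos]
        simp only [site_sub10]
        rw [cast_pred _ (by omega : 1 ≤ L - 1)]
        exact mem_addSeq.mpr (Or.inr ⟨L - 1 - 1, by omega, rfl⟩)
    rwa [hL1] at key
  refine ⟨addSeq σ pos L, ?_, ?_⟩
  · have h1 := claim (L - 1) (by omega) (by omega)
    have hcast : ((L - 1 : ℕ) : ℝ) = (L : ℝ) - 1 := by
      have : 1 ≤ L := by omega
      push_cast [this]
      ring
    rw [hcast] at h1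
    have hLpos : (1 : ℝ) ≤ (L : ℝ) := by exact_mod_cast (by omega : 1 ≤ L)
    nlinarith
  · apply commHeight_addSeq hnot
    intro s hs
    rcases Nat.eq_zero_or_pos s with h0 | h0
    · rw [h0, addSeq_zero]
      nlinarith
    · rcases Nat.lt_or_ge s L with hsL | hsL
      · have h1 := claim s h0 (by omega)
        have h2 : (0:ℝ) ≤ s * h := by positivity
        nlinarith
      · have hsL' : s = L := by omega
        rw [hsL']
        have h1 := claim (L - 1) (by omega) (by omega)
        have h2 : (0:ℝ) ≤ ((L - 1 : ℕ) : ℝ) * h := by positivity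
        nlinarith

/-- Grow: add a full new column segment next to a long full run. -/
lemma grow_col (hL : 2 ≤ L) (hJH : 0 < JH) (hJV : 0 < JV) (hh0 : 0 < h) (hJHV : JV < JH)
    {σ : Config L} (e b : ZMod L) (r : ℕ) (hr1 : 1 ≤ r) (hrL : r ≤ L - 1)
    (hrh : 2 * JV < h * r)
    (hfull : ∀ t < r, ((e, b + (t : ℕ)) : Site L) ∈ σ)
    (hempty : ∀ t < r, ((e + 1, b + (t : ℕ)) : Site L) ∉ σ) :
    ∃ σ', HA JH JV h σ' < HA JH JV h σ ∧
      commHeight (HA JH JV h) σ σ' ≤ HA JH JV h σ + 2 * JH := by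
  set pos : ℕ → Site L := fun t => ((e + 1, b + (t : ℕ)) : Site L) with hpos
  have hinj : ∀ s < r, ∀ t < r, pos s = pos t → s = t := by
    intro s hs t ht he
    rw [hpos] at he
    simp only [site_eq] at he
    have hcast : ((s : ℕ) : ZMod L) = ((t : ℕ) : ZMod L) := add_left_cancel he.2
    exact zmod_natCast_inj (by omega) (by omega) hcast
  have hnot : ∀ s < r, pos s ∉ addSeq σ pos s := by
    intro s hs hcon
    rcases mem_addSeq.mp hcon with hin | ⟨t, ht, he⟩
    · exact hempty s hs hin
    · exact absurd (hinj t (by omega) s hs he) (by omega)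
  have hhor : ∀ s, s < r → ∀ (τ : Config L), σ ⊆ τ → pos s - (1, 0) ∈ τ := by
    intro s hs τ hsub
    apply hsub
    rw [hpos]
    simp only [site_sub10, add_sub_cancel_right]
    exact hfull s hs
  have hstep0 : 1 ≤ r → HA JH JV h (addSeq σ pos 1) ≤ HA JH JV h σ + 2 * JV - h := by
    intro h1
    have key := step_insert_v (τ := addSeq σ pos 0) (h := h) hL hJH hJV (hnot 0 h1)
      (Or.inr (hhor 0 h1 _ (addSeq_supset σ pos 0)))
    rw [← addSeq_succ] at key
    rwa [addSeq_zero σ pos] at key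
  have hstep : ∀ s, 1 ≤ s → s < r →
      HA JH JV h (addSeq σ pos (s + 1)) ≤ HA JH JV h (addSeq σ pos s) - h := by
    intro s h1 h2
    rw [addSeq_succ]
    apply step_insert_h hL hJH hJV (hnot s h2)
    · exact Or.inr (hhor s h2 _ (addSeq_supset σ pos s))
    · right
      rw [hpos]
      simp only [site_sub01]
      rw [cast_pred _ h1]
      exact mem_addSeq.mpr (Or.inr ⟨s - 1, by omega, rfl⟩)
  have claim : ∀ s, 1 ≤ s → s ≤ r → HA JH JV h (addSeq σ pos s)
      ≤ HA JH JV h σ + 2 * JV - s * h := by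
    intro s
    induction s with
    | zero => omega
    | succ s ih =>
      intro _ hs
      rcases Nat.eq_zero_or_pos s with h0 | h0
      · rw [h0]
        simpa using hstep0 (by omega)
      · have h1 := ih h0 (by omega)
        have h2 := hstep s h0 (by omega)
        push_cast
        push_cast at h1
        linarith
  refine ⟨addSeq σ pos r, ?_, ?_⟩
  · have h1 := claim r hr1 le_rfl
    linarith
  · apply commHeight_addSeq hnot
    intro s hs
    rcases Nat.eq_zero_or_pos s with h0 | h0
    · rw [h0, addSeq_zero]
      nlinarith
    · have h1 := claim s h0 hs
      have h2 : (0:ℝ) ≤ s * h := by positivity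
      nlinarith

/-- Shrink: remove a short full run column from the top. -/
lemma shrink_col (hL : 2 ≤ L) (hJH : 0 < JH) (hJV : 0 < JV) (hh0 : 0 < h) (hJHV : JV < JH)
    {σ : Config L} (e b : ZMod L) (r : ℕ) (hr1 : 1 ≤ r) (hrL : r ≤ L - 1)
    (hrh : h * r < 2 * JV)
    (hfull : ∀ t < r, ((e, b + (t : ℕ)) : Site L) ∈ σ)
    (hright : ∀ t < r, ((e + 1, b + (t : ℕ)) : Site L) ∉ σ)
    (htop : ((e, b + (r : ℕ)) : Site L) ∉ σ)
    (hbot : ((e, b - 1) : Site L) ∉ σ) :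
    ∃ σ', HA JH JV h σ' < HA JH JV h σ ∧
      commHeight (HA JH JV h) σ σ' ≤ HA JH JV h σ + 2 * JH := by
  set pos : ℕ → Site L := fun s => ((e, b + ((r - 1 - s : ℕ) : ZMod L)) : Site L) with hpos
  have hinj : ∀ s < r, ∀ t < r, pos s = pos t → s = t := by
    intro s hs t ht he
    rw [hpos] at he
    simp only [site_eq] at he
    have hcast : ((r - 1 - s : ℕ) : ZMod L) = ((r - 1 - t : ℕ) : ZMod L) := add_left_cancel he.2
    have := zmod_natCast_inj (s := r - 1 - s) (t := r - 1 - t) (by omega) (by omega) hcast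
    omega
  have hmem : ∀ s < r, pos s ∈ delSeq σ pos s := by
    intro s hs
    rw [mem_delSeq]
    refine ⟨hfull _ (by omega), ?_⟩
    intro t ht he
    exact absurd (hinj t (by omega) s hs he) (by omega)
  have hup : ∀ s < r, pos s + (0, 1) ∉ delSeq σ pos s := by
    intro s hs hcon
    rw [mem_delSeq] at hcon
    have hsite : pos s + (0, 1) = (e, b + ((r - s : ℕ) : ZMod L)) := by
      rw [hpos]
      simp only [site_add01]
      rw [cast_succ, show r - 1 - s + 1 = r - s by omega]
    rcases Nat.eq_zero_or_pos s with h0 | h0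
    · apply htop
      have := hcon.1
      rw [hsite] at this
      rwa [show r - s = r by omega] at this
    · apply hcon.2 (s - 1) (by omega)
      rw [hsite]
      simp only [hpos]
      rw [show r - 1 - (s - 1) = r - s by omega]
  have hrgt : ∀ s < r, pos s + (1, 0) ∉ delSeq σ pos s := by
    intro s hs hcon
    rw [mem_delSeq] at hcon
    apply hright (r - 1 - s) (by omega)
    have := hcon.1
    rwa [hpos, site_add10] at this
  have hstep : ∀ s < r,
      HA JH JV h (delSeq σ pos (s + 1)) ≤ HA JH JV h (delSeq σ pos s) + h := by
    intro s hs
    rw [delSeq_succ]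
    exact step_erase hL hJH hJV (hmem s hs) (Or.inl (hrgt s hs)) (Or.inl (hup s hs))
  have claim : ∀ s ≤ r, HA JH JV h (delSeq σ pos s) ≤ HA JH JV h σ + s * h := by
    intro s
    induction s with
    | zero => intro _; rw [delSeq_zero]; simp
    | succ s ih =>
      intro hs
      have h1 := ih (by omega)
      have h2 := hstep s (by omega)
      push_cast
      push_cast at h1
      linarith
  have hlast : HA JH JV h (delSeq σ pos r) ≤ HA JH JV h (delSeq σ pos (r - 1)) + h - 2 * JV := by
    have hr1' : r - 1 + 1 = r := by omega
    have key : HA JH JV h (delSeq σ pos (r - 1 + 1))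
        ≤ HA JH JV h (delSeq σ pos (r - 1)) + h - 2 * JV := by
      rw [delSeq_succ]
      apply step_erase_bot hL hJH hJV (hmem (r - 1) (by omega))
        (Or.inl (hrgt (r - 1) (by omega))) (hup (r - 1) (by omega))
      -- down neighbour of the last removed site is (e, b - 1) ∉ σ
      intro hcon
      rw [mem_delSeq] at hcon
      apply hbot
      have := hcon.1
      rwa [hpos, site_sub01, show r - 1 - (r - 1) = 0 by omega,
        show b + ((0 : ℕ) : ZMod L) - 1 = b - 1 by push_cast; ring] at this
    rwa [hr1'] at key
  refine ⟨delSeq σ pos r, ?_, ?_⟩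
  · have h1 := claim (r - 1) (by omega)
    have hcast : ((r - 1 : ℕ) : ℝ) = (r : ℝ) - 1 := by
      push_cast [hr1]
      ring
    rw [hcast] at h1
    nlinarith
  · apply commHeight_delSeq hmem
    intro s hs
    have h1 := claim s hs
    have h2 : (s : ℝ) * h ≤ (r : ℝ) * h := by
      have : (s : ℝ) ≤ (r : ℝ) := by exact_mod_cast hs
      nlinarith
    nlinarith

end Constructions2


section Final
variable {L : ℕ} [NeZero L] {JH JV h : ℝ}

lemma spin_mul_le_one (σ : Config L) (a bs : Site L) : spin σ a * spin σ bs ≤ 1 := by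
  have h1 := spin_le_one σ a; have h2 := spin_le_one σ bs
  have h3 := neg_one_le_spin σ a; have h4 := neg_one_le_spin σ bs
  nlinarith

lemma HA_univ_lt (hJH : 0 < JH) (hJV : 0 < JV) (hh0 : 0 < h) {σ : Config L}
    (hσ : σ ≠ Finset.univ) : HA JH JV h (Finset.univ : Config L) < HA JH JV h σ := by
  have hex : ∃ x : Site L, x ∉ σ := by
    by_contra hall
    push_neg at hall
    exact hσ (Finset.eq_univ_iff_forall.mpr hall)
  obtain ⟨x₀, hx₀⟩ := hex
  set N : ℝ := (Fintype.card (Site L) : ℝ) with hN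
  have hconst : ∑ _x : Site L, (1 : ℝ) = N := by
    rw [Finset.sum_const, Finset.card_univ, nsmul_eq_mul, mul_one]
  have hsum1 : ∑ x : Site L, spin (Finset.univ : Config L) x
      * spin (Finset.univ : Config L) (x + (1, 0)) = N := by
    rw [← hconst]
    refine Finset.sum_congr rfl fun x _ => ?_
    rw [spin_of_mem (Finset.mem_univ _), spin_of_mem (Finset.mem_univ _)]; ring
  have hsum2 : ∑ x : Site L, spin (Finset.univ : Config L) x
      * spin (Finset.univ : Config L) (x + (0, 1)) = N := by
    rw [← hconst]
    refine Finset.sum_congr rfl fun x _ => ?_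
    rw [spin_of_mem (Finset.mem_univ _), spin_of_mem (Finset.mem_univ _)]; ring
  have hsum3 : ∑ x : Site L, spin (Finset.univ : Config L) x = N := by
    rw [← hconst]
    exact Finset.sum_congr rfl fun x _ => spin_of_mem (Finset.mem_univ _)
  have hb1 : ∑ x : Site L, spin σ x * spin σ (x + (1, 0)) ≤ N := by
    rw [← hconst]
    exact Finset.sum_le_sum fun i _ => spin_mul_le_one σ _ _
  have hb2 : ∑ x : Site L, spin σ x * spin σ (x + (0, 1)) ≤ N := by
    rw [← hconst]
    exact Finset.sum_le_sum fun i _ => spin_mul_le_one σ _ _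
  have hb3 : ∑ x : Site L, spin σ x < N := by
    rw [← hconst]
    refine Finset.sum_lt_sum (fun i _ => spin_le_one σ i) ⟨x₀, Finset.mem_univ _, ?_⟩
    rw [spin_of_not_mem hx₀]
    norm_num
  unfold HA
  rw [hsum1, hsum2, hsum3]
  have e1 : (JH / 2) * (∑ x : Site L, spin σ x * spin σ (x + (1, 0))) ≤ (JH / 2) * N :=
    mul_le_mul_of_nonneg_left hb1 (by linarith)
  have e2 : (JV / 2) * (∑ x : Site L, spin σ x * spin σ (x + (0, 1))) ≤ (JV / 2) * N :=
    mul_le_mul_of_nonneg_left hb2 (by linarith)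
  have e3 : (h / 2) * (∑ x : Site L, spin σ x) < (h / 2) * N :=
    mul_lt_mul_of_pos_left hb3 (by linarith)
  linarith

end Final


theorem aniso_metastable_state (L : ℕ) [NeZero L] (JH JV h : ℝ)
    (hJHV : JV < JH) (hh0 : 0 < h) (hh : h < 2 * JV)
    (hnd : ∀ n : ℕ, (n : ℝ) ≠ 2 * JV / h)
    (LV : ℕ) (hLV : LV = ⌈2 * JV / h⌉₊)
    (hL : ((L : ℝ)) ^ 2 >
      (max (2 * JH / (h * (LV : ℝ) - 2 * JV))
           (2 * JH * ((LV : ℝ) - 1) / (2 * JV - h * ((LV : ℝ) - 1)) + (LV : ℝ))) ^ 2) (Γ : ℝ)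
    (hΓ : Γ = 2 * (LV : ℝ) * (JH + JV) - h * (1 + ((LV : ℝ) - 1) * (LV : ℝ))) :
    (∀ σ : Config L, σ ≠ boxPlus L → HA JH JV h (boxPlus L) < HA JH JV h σ) ∧
    (∀ σ : Config L, σ ≠ boxMinus L → σ ≠ boxPlus L →
      (∃ σ' : Config L, HA JH JV h σ' < HA JH JV h σ ∧
        commHeight (HA JH JV h) σ σ' - HA JH JV h σ < Γ) ∧
      sInf {v : ℝ | ∃ η : Config L, HA JH JV h η < HA JH JV h σ ∧
        v = commHeight (HA JH JV h) σ η - HA JH JV h σ} < Γ) := by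
  have hJV : 0 < JV := by linarith
  have hJH : 0 < JH := by linarith
  have hx1 : (1 : ℝ) < 2 * JV / h := by
    rw [lt_div_iff₀ hh0]; linarith
  have hLV2 : 2 ≤ LV := by
    rw [hLV]
    have h1 : 1 < ⌈2 * JV / h⌉₊ := Nat.lt_ceil.mpr (by exact_mod_cast hx1)
    omega
  have hLV2R : (2 : ℝ) ≤ (LV : ℝ) := by exact_mod_cast hLV2
  have hceil_le : 2 * JV / h ≤ (LV : ℝ) := by rw [hLV]; exact Nat.le_ceil _
  have hgt : 2 * JV / h < (LV : ℝ) :=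
    lt_of_le_of_ne hceil_le fun hcon => hnd LV hcon.symm
  have hc1 : 2 * JV < h * (LV : ℝ) := by
    rw [div_lt_iff₀ hh0] at hgt; linarith
  have hc2 : h * ((LV : ℝ) - 1) < 2 * JV := by
    have hcl : (LV : ℝ) < 2 * JV / h + 1 := by
      rw [hLV]; exact Nat.ceil_lt_add_one (by positivity)
    have h2 : (LV : ℝ) - 1 < 2 * JV / h := by linarith
    rw [lt_div_iff₀ hh0] at h2; linarith
  have hGam : 2 * JH < Γ := by
    rw [hΓ]
    have hmul : h * ((LV : ℝ) - 1) * (LV : ℝ) < 2 * JV * (LV : ℝ) :=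
      mul_lt_mul_of_pos_right hc2 (by linarith)
    have hJHLV : JH * 1 ≤ JH * ((LV : ℝ) - 1) :=
      mul_le_mul_of_nonneg_left (by linarith) (le_of_lt hJH)
    nlinarith
  have hL3 : 3 ≤ L := by
    have hA2 : (2 : ℝ) ≤ 2 * JH * ((LV : ℝ) - 1) / (2 * JV - h * ((LV : ℝ) - 1)) + (LV : ℝ) := by
      have hd : 0 ≤ 2 * JH * ((LV : ℝ) - 1) / (2 * JV - h * ((LV : ℝ) - 1)) :=
        div_nonneg (by nlinarith) (by linarith)
      linarith
    have hM2 : (2 : ℝ) ≤ max (2 * JH / (h * (LV : ℝ) - 2 * JV))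
        (2 * JH * ((LV : ℝ) - 1) / (2 * JV - h * ((LV : ℝ) - 1)) + (LV : ℝ)) :=
      le_trans hA2 (le_max_right _ _)
    have hLM : max (2 * JH / (h * (LV : ℝ) - 2 * JV))
        (2 * JH * ((LV : ℝ) - 1) / (2 * JV - h * ((LV : ℝ) - 1)) + (LV : ℝ)) < (L : ℝ) := by
      by_contra hcon
      push_neg at hcon
      have h2 : ((L : ℝ)) ^ 2 ≤ (max (2 * JH / (h * (LV : ℝ) - 2 * JV))
          (2 * JH * ((LV : ℝ) - 1) / (2 * JV - h * ((LV : ℝ) - 1)) + (LV : ℝ))) ^ 2 :=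
        pow_le_pow_left₀ (Nat.cast_nonneg L) hcon 2
      linarith
    have h2L : (2 : ℝ) < (L : ℝ) := lt_of_le_of_lt hM2 hLM
    have : 2 < L := by exact_mod_cast h2L
    omega
  have hL2 : 2 ≤ L := by omega
  constructor
  · intro σ hσ
    exact HA_univ_lt hJH hJV hh0 hσ
  · intro σ hσm hσp
    have hσp' : σ ≠ Finset.univ := hσp
    have key : ∃ σ', HA JH JV h σ' < HA JH JV h σ ∧
        commHeight (HA JH JV h) σ σ' ≤ HA JH JV h σ + 2 * JH := by
      by_cases hfc : ∃ c : ZMod L, ∀ i : ZMod L, ((c, i) : Site L) ∈ σ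
      · obtain ⟨c₀, hc₀⟩ := hfc
        have hnall : ∃ d : ZMod L, ∃ i : ZMod L, ((d, i) : Site L) ∉ σ := by
          by_contra hall
          push_neg at hall
          apply hσp'
          apply Finset.eq_univ_iff_forall.mpr
          intro x
          have := hall x.1 x.2
          simpa using this
        obtain ⟨d₀, i₀, hd₀⟩ := hnall
        have hQ0 : ∀ i : ZMod L, ((c₀ + ((0 : ℕ) : ZMod L), i) : Site L) ∈ σ := by
          intro i; simpa using hc₀ i
        have hs₀ : ¬ ∀ i : ZMod L, ((c₀ + (((d₀ - c₀).val : ℕ) : ZMod L), i) : Site L) ∈ σ := by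
          intro hcon
          have := hcon i₀
          rw [ZMod.natCast_zmod_val, show c₀ + (d₀ - c₀) = d₀ from by ring] at this
          exact hd₀ this
        rcases nat_boundary' (Q := fun s => ∀ i : ZMod L, ((c₀ + (s : ℕ), i) : Site L) ∈ σ)
            hQ0 hs₀ with ⟨t, -, -, hQt, hQt1⟩ | ⟨t, -, htb, -, -⟩
        · have hcfull : ∀ i : ZMod L, ((c₀ + ((t : ℕ) : ZMod L), i) : Site L) ∈ σ := hQt
          have hcnext : ¬ ∀ i : ZMod L, ((c₀ + ((t : ℕ) : ZMod L) + 1, i) : Site L) ∈ σ := by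
            intro hcon
            apply hQt1
            intro i
            have := hcon i
            rwa [cast_succ] at this
          push_neg at hcnext
          obtain ⟨j₀, hj₀⟩ := hcnext
          by_cases hne : ∃ i : ZMod L, ((c₀ + ((t : ℕ) : ZMod L) + 1, i) : Site L) ∈ σ
          · obtain ⟨j₁, hj₁⟩ := hne
            obtain ⟨b, m, hm1, hmL, hgap, hb1, hb2⟩ := run_extract
              (P := fun i => ((c₀ + ((t : ℕ) : ZMod L) + 1, i) : Site L) ∉ σ) hj₀
              (not_not_intro hj₁)
            exact fill_gap_col hL2 hJH hJV hh0 _ hcfull b m hm1 hmL hgap (not_not.mp hb1)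
          · push_neg at hne
            exact fill_empty_col hL2 hJH hJV hh0 hJHV _ hcfull hne
        · omega
      · by_cases hfr : ∃ c : ZMod L, ∀ i : ZMod L, ((i, c) : Site L) ∈ σ
        · obtain ⟨c₀, hc₀⟩ := hfr
          have hnall : ∃ d : ZMod L, ∃ i : ZMod L, ((i, d) : Site L) ∉ σ := by
            by_contra hall
            push_neg at hall
            apply hσp'
            apply Finset.eq_univ_iff_forall.mpr
            intro x
            have := hall x.2 x.1
            simpa using this
          obtain ⟨d₀, i₀, hd₀⟩ := hnall
          have hQ0 : ∀ i : ZMod L, ((i, c₀ + ((0 : ℕ) : ZMod L)) : Site L) ∈ σ := by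
            intro i; simpa using hc₀ i
          have hs₀ : ¬ ∀ i : ZMod L, ((i, c₀ + (((d₀ - c₀).val : ℕ) : ZMod L)) : Site L) ∈ σ := by
            intro hcon
            have := hcon i₀
            rw [ZMod.natCast_zmod_val, show c₀ + (d₀ - c₀) = d₀ from by ring] at this
            exact hd₀ this
          rcases nat_boundary' (Q := fun s => ∀ i : ZMod L, ((i, c₀ + (s : ℕ)) : Site L) ∈ σ)
              hQ0 hs₀ with ⟨t, -, -, hQt, hQt1⟩ | ⟨t, -, htb, -, -⟩
          · have hcfull : ∀ i : ZMod L, ((i, c₀ + ((t : ℕ) : ZMod L)) : Site L) ∈ σ := hQt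
            have hcnext : ¬ ∀ i : ZMod L, ((i, c₀ + ((t : ℕ) : ZMod L) + 1) : Site L) ∈ σ := by
              intro hcon
              apply hQt1
              intro i
              have := hcon i
              rwa [cast_succ] at this
            push_neg at hcnext
            obtain ⟨j₀, hj₀⟩ := hcnext
            by_cases hne : ∃ i : ZMod L, ((i, c₀ + ((t : ℕ) : ZMod L) + 1) : Site L) ∈ σ
            · obtain ⟨j₁, hj₁⟩ := hne
              obtain ⟨b, m, hm1, hmL, hgap, hb1, hb2⟩ := run_extract
                (P := fun i => ((i, c₀ + ((t : ℕ) : ZMod L) + 1) : Site L) ∉ σ) hj₀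
                (not_not_intro hj₁)
              exact fill_gap_row hL2 hJH hJV hh0 _ hcfull b m hm1 hmL hgap (not_not.mp hb1)
            · push_neg at hne
              exact fill_empty_row hL2 hJH hJV hh0 _ hcfull hne
          · omega
        · by_cases hflip : ∃ x : Site L, HA JH JV h (flipSpin σ x) < HA JH JV h σ
          · obtain ⟨x, hx⟩ := hflip
            refine ⟨flipSpin σ x, hx, ?_⟩
            have hpath : IsPath σ (flipSpin σ x) [σ, flipSpin σ x] := by
              refine ⟨by simp, by simp, List.isChain_pair.mpr ⟨x, rfl⟩⟩
            have hM : ∀ η ∈ [σ, flipSpin σ x], HA JH JV h η ≤ HA JH JV h σ := by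
              intro η hη
              simp only [List.mem_cons, List.not_mem_nil, or_false] at hη
              rcases hη with rfl | rfl
              · exact le_rfl
              · exact le_of_lt hx
            exact le_trans (commHeight_le hpath hM) (by linarith)
          · push_neg at hflip hfc hfr
            obtain ⟨x₀, hx₀⟩ := Finset.nonempty_iff_ne_empty.mpr (show σ ≠ ∅ from hσm)
            obtain ⟨i₁, hi₁⟩ := hfc x₀.1
            have hP : ((x₀.1, x₀.2) : Site L) ∈ σ := by rwa [Prod.mk.eta]
            obtain ⟨b, r, hr1, hrL, hrun, hbotn, htopn⟩ := run_extract
              (P := fun i => ((x₀.1, i) : Site L) ∈ σ) hP hi₁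
            set c : ZMod L := x₀.1 with hcdef
            have hQ0 : ∀ t < r,
                ((c + ((0 : ℕ) : ZMod L), b + ((t : ℕ) : ZMod L)) : Site L) ∈ σ := by
              intro t ht
              simpa using hrun t ht
            have hexnQ : ∃ s : ℕ, ¬ ∀ t < r,
                ((c + ((s + 1 : ℕ) : ZMod L), b + ((t : ℕ) : ZMod L)) : Site L) ∈ σ := by
              obtain ⟨i₂, hi₂⟩ := hfr b
              by_cases hv0 : (i₂ - c).val = 0
              · exfalso
                have heq : i₂ = c := by
                  have hv : i₂ - c = 0 := by
                    have := ZMod.val_eq_zero (i₂ - c)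
                    exact this.mp hv0
                  exact sub_eq_zero.mp hv
                have h0 := hQ0 0 hr1
                apply hi₂
                rw [heq]
                simpa using h0
              · refine ⟨(i₂ - c).val - 1, ?_⟩
                intro hcon
                have := hcon 0 hr1
                rw [show (i₂ - c).val - 1 + 1 = (i₂ - c).val by omega] at this
                rw [ZMod.natCast_zmod_val, show c + (i₂ - c) = i₂ from by ring] at this
                apply hi₂
                simpa using this
            set s' := Nat.find hexnQ with hs'def
            have hnQ := Nat.find_spec hexnQ
            have hQall : ∀ j ≤ s', ∀ t < r,
                ((c + ((j : ℕ) : ZMod L), b + ((t : ℕ) : ZMod L)) : Site L) ∈ σ := by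
              intro j hj
              cases j with
              | zero => exact hQ0
              | succ j => exact not_not.mp (Nat.find_min hexnQ (by omega))
            have hbnd : ∀ j ≤ s',
                ((c + ((j : ℕ) : ZMod L), b + ((r : ℕ) : ZMod L)) : Site L) ∉ σ ∧
                ((c + ((j : ℕ) : ZMod L), b - 1) : Site L) ∉ σ := by
              intro j
              induction j with
              | zero =>
                intro _
                constructor
                · intro hcon; apply htopn; simpa using hcon
                · intro hcon; apply hbotn; simpa using hcon
              | succ j ih =>
                intro hj
                have hprev := ih (by omega)
                have hnext : ∀ t < r,
                    ((c + ((j : ℕ) : ZMod L) + 1, b + ((t : ℕ) : ZMod L)) : Site L) ∈ σ := by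
                  intro t ht
                  have := hQall (j + 1) hj t ht
                  rwa [← cast_succ] at this
                have hstep := col_step_bounds hL2 hJH hJV hh0 hflip (c + ((j : ℕ) : ZMod L)) b r
                  hr1 (hQall j (by omega)) hprev.1 hprev.2 hnext
                constructor
                · have := hstep.1; rwa [cast_succ] at this
                · have := hstep.2; rwa [cast_succ] at this
            have hdich := col_dichotomy hL2 hJH hJV hh0 hflip (c + ((s' : ℕ) : ZMod L)) b r
              (hQall s' le_rfl)
            have hempty : ∀ t < r,
                ((c + ((s' : ℕ) : ZMod L) + 1, b + ((t : ℕ) : ZMod L)) : Site L) ∉ σ := by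
              rcases hdich with hfull1 | hempty1
              · exfalso
                apply hnQ
                intro t ht
                have := hfull1 t ht
                rwa [cast_succ] at this
              · exact hempty1
            by_cases hcase : LV ≤ r
            · refine grow_col hL2 hJH hJV hh0 hJHV _ b r hr1 hrL ?_ (hQall s' le_rfl) hempty
              have hrc : (LV : ℝ) ≤ (r : ℝ) := by exact_mod_cast hcase
              have := mul_le_mul_of_nonneg_left hrc (le_of_lt hh0)
              linarith
            · refine shrink_col hL2 hJH hJV hh0 hJHV _ b r hr1 hrL ?_ (hQall s' le_rfl) hempty
                (hbnd s' le_rfl).1 (hbnd s' le_rfl).2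
              have hrLV : r ≤ LV - 1 := by omega
              have hrR : (r : ℝ) ≤ (LV : ℝ) - 1 := by
                have h1 : (r : ℝ) ≤ ((LV - 1 : ℕ) : ℝ) := by exact_mod_cast hrLV
                rwa [Nat.cast_sub (by omega), Nat.cast_one] at h1
              have := mul_le_mul_of_nonneg_left hrR (le_of_lt hh0)
              linarith
    obtain ⟨σ', h1, h2⟩ := key
    refine ⟨⟨σ', h1, by linarith⟩, ?_⟩
    have hbdd : BddBelow {v : ℝ | ∃ η : Config L, HA JH JV h η < HA JH JV h σ ∧
        v = commHeight (HA JH JV h) σ η - HA JH JV h σ} := by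
      refine ⟨min 0 (-(HA JH JV h σ)), ?_⟩
      rintro v ⟨η, hη, rfl⟩
      by_cases hne : Set.Nonempty {M : ℝ | ∃ γ : List (Config L), IsPath σ η γ ∧
          ∀ η' ∈ γ, HA JH JV h η' ≤ M}
      · have hge := commHeight_ge hne
        have hv : (0 : ℝ) ≤ commHeight (HA JH JV h) σ η - HA JH JV h σ := by linarith
        exact le_trans (min_le_left _ _) hv
      · have hemp := Set.not_nonempty_iff_eq_empty.mp hne
        have hzero : commHeight (HA JH JV h) σ η = 0 := by
          unfold commHeight
          rw [hemp]
          exact Real.sInf_empty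
        rw [hzero]
        simpa using min_le_right (0 : ℝ) (-(HA JH JV h σ))
    have hmem : (commHeight (HA JH JV h) σ σ' - HA JH JV h σ) ∈ {v : ℝ | ∃ η : Config L,
        HA JH JV h η < HA JH JV h σ ∧ v = commHeight (HA JH JV h) σ η - HA JH JV h σ} :=
      ⟨σ', h1, rfl⟩
    have hfin := csInf_le hbdd hmem
    linarith
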